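/- Let n ≥ 0 and let the group (Circle)ⁿ × {1, −1} act on the unit sphere S^{2n} of ℂⁿ × ℝ by (z, ε)·(v, x) = (z·v, εx), where z ∈ (Circle)ⁿ acts on ℂⁿ by coordinatewise multiplication. Then a nontrivial subgroup H of (Circle)ⁿ × {1, −1} acts freely on S^{2n} if and only if H is the two-element subgroup generated by the antipodal element ((−1, …, −1), −1), whose action on S^{2n} is the antipodal map (v, x) ↦ (−v, −x). -/

import Mathlib

/-- The element `-1` of the circle group. -/
noncomputable def circleNegOne : Circle := ⟨-1, by simp [Submonoid.unitSphere]⟩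

/-- Let the group `(Circle)ⁿ × {1, -1}` (the centralizer of the maximal torus of `O(2n+1)`,
with `{1, -1}` realized as `ℤˣ`) act on the unit sphere `S^{2n} ⊆ ℂⁿ × ℝ` by
`(z, ε)·(v, x) = (z·v, εx)`.  A nontrivial subgroup `H` acts freely on `S^{2n}` if and
only if `H` is the two-element subgroup generated by the antipodal element
`((-1, …, -1), -1)`, whose action is the antipodal map `(v, x) ↦ (-v, -x)`. -/
theorem nontrivial_subgroup_free_on_even_sphere_iff_antipodal
    (n : ℕ) (H : Subgroup ((Fin n → Circle) × ℤˣ)) (hH : H ≠ ⊥) :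
    (∀ g ∈ H,
      (∃ (v : EuclideanSpace ℂ (Fin n)) (x : ℝ), ‖v‖ ^ 2 + x ^ 2 = 1 ∧
        (∀ i, (g.1 i : ℂ) * v i = v i) ∧ ((g.2 : ℤ) : ℝ) * x = x) → g = 1) ↔
    H = Subgroup.zpowers ((fun _ => circleNegOne : Fin n → Circle), (-1 : ℤˣ)) := by
  set a : (Fin n → Circle) × ℤˣ := ((fun _ => circleNegOne : Fin n → Circle), (-1 : ℤˣ))
    with ha
  have hcc : circleNegOne * circleNegOne = 1 := by
    ext
    change ((-1 : ℂ) * (-1)) = 1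
    norm_num
  have haa : a * a = 1 := by
    refine Prod.ext ?_ ?_
    · funext i
      exact hcc
    · simp [ha]
  constructor
  · intro hfree
    -- Step 1: elements with second coordinate 1 are trivial
    have key1 : ∀ g ∈ H, g.2 = 1 → g = 1 := by
      intro g hg h2
      apply hfree g hg
      refine ⟨0, 1, by simp, fun i => by simp, by simp [h2]⟩
    -- Step 2: nontrivial elements equal `a`
    have key2 : ∀ g ∈ H, g ≠ 1 → g = a := by
      intro g hg hne
      have h2 : g.2 = -1 := by
        rcases Int.units_eq_one_or g.2 with h | h
        · exact absurd (key1 g hg h) hne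
        · exact h
      have hsq : g * g = 1 := by
        apply key1 _ (H.mul_mem hg hg)
        simp [h2]
      have hz : ∀ i, g.1 i = circleNegOne := by
        intro i
        by_contra hzi
        -- then g.1 i = 1 and we get a fixed point
        have hsq1 : g.1 i * g.1 i = 1 := by
          have := congrArg Prod.fst hsq
          exact congrFun this i
        have hc : (g.1 i : ℂ) * (g.1 i : ℂ) = 1 := by
          simpa using congrArg (Subtype.val) hsq1
        rcases mul_self_eq_one_iff.mp hc with h1 | h1
        · -- g.1 i = 1 : construct fixed point
          apply hne
          apply hfree g hg
          refine ⟨EuclideanSpace.single i (1 : ℂ), 0, ?_, ?_, by simp⟩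
          · simp [EuclideanSpace.norm_single]
          · intro j
            by_cases hij : j = i
            · subst hij
              simp [EuclideanSpace.single_apply, h1]
            · simp [EuclideanSpace.single_apply, hij]
        · exact hzi (by ext; exact h1)
      refine Prod.ext ?_ h2
      funext i
      exact hz i
    -- a ∈ H
    obtain ⟨g, hg, hgne⟩ := (Subgroup.nontrivial_iff_exists_ne_one H).mp
      ((Subgroup.nontrivial_iff_ne_bot H).mpr hH)
    have haH : a ∈ H := key2 g hg hgne ▸ hg
    apply le_antisymm
    · intro g hg
      by_cases hne : g = 1
      · exact hne ▸ (Subgroup.zpowers a).one_mem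
      · rw [key2 g hg hne]
        exact Subgroup.mem_zpowers a
    · exact Subgroup.zpowers_le.mpr haH
  · intro hEq g hg hfix
    rw [hEq] at hg
    obtain ⟨k, hk⟩ := Subgroup.mem_zpowers_iff.mp hg
    have ha2 : a ^ (2 : ℤ) = 1 := by rw [zpow_two]; exact haa
    have hcases : g = 1 ∨ g = a := by
      rcases Int.even_or_odd k with ⟨m, hm⟩ | ⟨m, hm⟩
      · left
        rw [← hk, hm]
        have : m + m = 2 * m := by ring
        rw [this, zpow_mul, ha2, one_zpow]
      · right
        rw [← hk, hm, zpow_add, zpow_mul, ha2, one_zpow, zpow_one, one_mul]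
    rcases hcases with h | h
    · exact h
    · exfalso
      subst h
      obtain ⟨v, x, hvx, hv, hx⟩ := hfix
      have hx0 : x = 0 := by
        have : -x = x := by simpa [ha] using hx
        linarith
      have hv0 : v = 0 := by
        ext i
        have hvi := hv i
        simp [ha, circleNegOne] at hvi
        have h' : -(v i) = v i := by simpa using hvi
        have : (0 : EuclideanSpace ℂ (Fin n)) i = 0 := rfl
        rw [this]
        linear_combination (-1/2 : ℂ) * h'
      rw [hv0, hx0] at hvx
      simp at hvx
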